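/- Let δ ≥ 3, s ≥ 1 and n be integers with n ≥ (δ−1)s + 2. Then the spectral radius of the graph G₂ = K_s ∨ (K_{n−(δ−1)s−1} ∪ ((δ−2)s+1)K_1) equals the largest real root of the cubic polynomial φ(x) = x³ + (−n + (δ−2)s + 3)x² + (−n − (δ−2)s² + (δ−3)s + 2)x + (δ−2)s²n + sn − (δ−1)(δ−2)s³ − (3δ−5)s² − 2s. -/

import Mathlib

open Finset

noncomputable def specRad {V : Type*} [Fintype V] (G : SimpleGraph V) : ℝ :=
  letI := Classical.decEq V
  letI := Classical.decRel G.Adj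
  sSup (spectrum ℝ (G.adjMatrix ℝ))

def joinCliques (s t : ℕ) (f : Fin t → ℕ) :
    SimpleGraph (Fin s ⊕ (Σ i : Fin t, Fin (f i))) where
  Adj x y := x ≠ y ∧ ∀ a b, x = Sum.inr a → y = Sum.inr b → a.1 = b.1
  symm := ⟨fun _x _y h => ⟨h.1.symm, fun a b hy hx => (h.2 b a hx hy).symm⟩⟩
  loopless := ⟨fun _x h => h.1 rfl⟩

def gJoin (s m t p : ℕ) :=
  joinCliques s (t + 1) (Fin.cons m fun _ => p)

section Helpers

open Sum Polynomial Filter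

lemma det_zero_iff_eig {n : Type*} [Fintype n] [DecidableEq n] (M : Matrix n n ℝ) (μ : ℝ) :
    (algebraMap ℝ (Matrix n n ℝ) μ - M).det = 0 ↔ ∃ v ≠ 0, M.mulVec v = μ • v := by
  rw [← Matrix.exists_mulVec_eq_zero_iff]
  have key : ∀ v, (algebraMap ℝ (Matrix n n ℝ) μ - M).mulVec v = μ • v - M.mulVec v := by
    intro v
    rw [Matrix.sub_mulVec, Algebra.algebraMap_eq_smul_one, Matrix.smul_mulVec,
      Matrix.one_mulVec]
  constructor
  · rintro ⟨v, hv, h⟩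
    rw [key, sub_eq_zero] at h
    exact ⟨v, hv, h.symm⟩
  · rintro ⟨v, hv, h⟩
    exact ⟨v, hv, by rw [key, h, sub_self]⟩

theorem spec_iff {n : Type*} [Fintype n] [DecidableEq n] (M : Matrix n n ℝ) (μ : ℝ) :
    μ ∈ spectrum ℝ M ↔ ∃ v ≠ 0, M.mulVec v = μ • v := by
  rw [spectrum.mem_iff, Matrix.isUnit_iff_isUnit_det, isUnit_iff_ne_zero, not_not,
    det_zero_iff_eig]

theorem cubic_iff (sr mr tr μ : ℝ) :
    (∃ a b c : ℝ, ¬(a = 0 ∧ b = 0 ∧ c = 0) ∧ μ * a = (sr - 1) * a + mr * b + tr * c ∧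
        μ * b = sr * a + (mr - 1) * b ∧ μ * c = sr * a)
      ↔ μ * (μ - sr + 1) * (μ - mr + 1) - mr * sr * μ - tr * sr * (μ - mr + 1) = 0 := by
  set B : Matrix (Fin 3) (Fin 3) ℝ := !![sr - 1, mr, tr; sr, mr - 1, 0; sr, 0, 0] with hB
  have hdet : (algebraMap ℝ (Matrix (Fin 3) (Fin 3) ℝ) μ - B).det
      = μ * (μ - sr + 1) * (μ - mr + 1) - mr * sr * μ - tr * sr * (μ - mr + 1) := by
    simp [Matrix.det_fin_three, Matrix.algebraMap_matrix_apply, hB, Matrix.vecHead,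
      Matrix.vecTail]
    ring
  rw [← hdet, det_zero_iff_eig]
  constructor
  · rintro ⟨a, b, c, h0, e1, e2, e3⟩
    refine ⟨![a, b, c], ?_, ?_⟩
    · intro h
      exact h0 ⟨congrFun h 0, congrFun h 1, congrFun h 2⟩
    · ext i
      fin_cases i <;>
        simp [hB, Matrix.mulVec, dotProduct, Fin.sum_univ_three] <;> linarith
  · rintro ⟨v, hv, he⟩
    refine ⟨v 0, v 1, v 2, ?_, ?_, ?_, ?_⟩
    · rintro ⟨h0, h1, h2⟩
      apply hv
      ext i
      fin_cases i <;> assumption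
    · have := congrFun he 0
      simp [hB, Matrix.mulVec, dotProduct, Fin.sum_univ_three] at this
      linarith
    · have := congrFun he 1
      simp [hB, Matrix.mulVec, dotProduct, Fin.sum_univ_three] at this
      linarith
    · have := congrFun he 2
      simp [hB, Matrix.mulVec, dotProduct, Fin.sum_univ_three] at this
      linarith

theorem largest_root (c2 c1 c0 : ℝ) (x0 : ℝ) (hx0 : x0 ^ 3 + c2 * x0 ^ 2 + c1 * x0 + c0 ≤ 0) :
    ∃ Λ : ℝ, x0 ≤ Λ ∧ Λ ^ 3 + c2 * Λ ^ 2 + c1 * Λ + c0 = 0 ∧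
      ∀ x : ℝ, x ^ 3 + c2 * x ^ 2 + c1 * x + c0 = 0 → x ≤ Λ := by
  set P : ℝ[X] := X ^ 3 + (C c2 * X ^ 2 + C c1 * X + C c0) with hP
  have heval : ∀ x, P.eval x = x ^ 3 + c2 * x ^ 2 + c1 * x + c0 := by
    intro x; simp [hP]; ring
  have hqlt : (C c2 * X ^ 2 + C c1 * X + C c0).degree < (X ^ 3 : ℝ[X]).degree := by
    rw [Polynomial.degree_X_pow]
    exact lt_of_le_of_lt Polynomial.degree_quadratic_le (by norm_num)
  have hdeg : P.degree = 3 := by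
    rw [hP, Polynomial.degree_add_eq_left_of_degree_lt hqlt, Polynomial.degree_X_pow]; rfl
  have hmonic : P.Monic := Polynomial.monic_X_pow_add (by
    exact lt_of_le_of_lt Polynomial.degree_quadratic_le (by norm_num))
  have hPne : P ≠ 0 := hmonic.ne_zero
  have htop : Tendsto (fun x => P.eval x) atTop atTop :=
    P.tendsto_atTop_of_leadingCoeff_nonneg (by rw [hdeg]; norm_num)
      (by rw [hmonic.leadingCoeff]; norm_num)
  obtain ⟨X1, hX1⟩ := ((htop.eventually_ge_atTop 0).and (eventually_ge_atTop x0)).exists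
  have hcont : ContinuousOn (fun x => P.eval x) (Set.Icc x0 X1) :=
    (Polynomial.continuous P).continuousOn
  have h0mem : (0:ℝ) ∈ Set.Icc (P.eval x0) (P.eval X1) := by
    constructor
    · rw [heval]; exact hx0
    · exact hX1.1
  obtain ⟨r, hrmem, hr⟩ := intermediate_value_Icc hX1.2 hcont h0mem
  have hroot_iff : ∀ x : ℝ, x ^ 3 + c2 * x ^ 2 + c1 * x + c0 = 0 ↔ x ∈ P.roots.toFinset := by
    intro x
    rw [Multiset.mem_toFinset, Polynomial.mem_roots hPne, Polynomial.IsRoot, heval]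
  have hne : P.roots.toFinset.Nonempty :=
    ⟨r, (hroot_iff r).mp (by rw [← heval]; exact hr)⟩
  refine ⟨P.roots.toFinset.max' hne, ?_, ?_, ?_⟩
  · exact le_trans hrmem.1
      (Finset.le_max' _ r ((hroot_iff r).mp (by rw [← heval]; exact hr)))
  · exact (hroot_iff _).mpr (Finset.max'_mem _ _)
  · exact fun x hx => Finset.le_max' _ x ((hroot_iff x).mp hx)

variable {s m t : ℕ}

local notation "V" => Fin s ⊕ (Σ i : Fin (t+1), Fin ((Fin.cons m fun _ => 1 : Fin (t+1) → ℕ) i))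

lemma adj_inl (j : Fin s) (y : V) : (gJoin s m t 1).Adj (inl j) y ↔ inl j ≠ y := by
  unfold gJoin joinCliques
  constructor
  · exact fun h => h.1
  · exact fun h => ⟨h, by rintro a b h1; simp at h1⟩

lemma adj_inr_inl (p : Σ i : Fin (t+1), Fin ((Fin.cons m fun _ => 1 : Fin (t+1) → ℕ) i))
    (j : Fin s) : (gJoin s m t 1).Adj (inr p) (inl j) :=
  by unfold gJoin joinCliques; exact ⟨by simp, by rintro a b ha hb; simp at hb⟩

lemma adj_inr_inr (p q : Σ i : Fin (t+1), Fin ((Fin.cons m fun _ => 1 : Fin (t+1) → ℕ) i)) :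
    (gJoin s m t 1).Adj (inr p) (inr q) ↔ p ≠ q ∧ p.1 = q.1 := by
  unfold gJoin joinCliques
  constructor
  · rintro ⟨h1, h2⟩
    exact ⟨fun h => h1 (by rw [h]), h2 p q rfl rfl⟩
  · rintro ⟨h1, h2⟩
    refine ⟨by simpa using h1, ?_⟩
    rintro a b ha hb
    cases Sum.inr.inj ha
    cases Sum.inr.inj hb
    exact h2

lemma sigma_sum (g : (Σ i : Fin (t+1), Fin ((Fin.cons m fun _ => 1 : Fin (t+1) → ℕ) i)) → ℝ) :
    (∑ p : (Σ i : Fin (t+1), Fin ((Fin.cons m fun _ => 1 : Fin (t+1) → ℕ) i)), g p)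
      = (∑ q : Fin m, g ⟨0, q⟩) + ∑ i : Fin t, ∑ q : Fin 1, g ⟨i.succ, q⟩ := by
  rw [← Finset.univ_sigma_univ, Finset.sum_sigma, Fin.sum_univ_succ]; rfl

section DecAdj
variable [DecidableRel (gJoin s m t 1).Adj]

lemma mulVec_apply (v : V → ℝ) (x : V) :
    ((gJoin s m t 1).adjMatrix ℝ).mulVec v x
      = ∑ y : V, if (gJoin s m t 1).Adj x y then v y else 0 := by
  simp [Matrix.mulVec, dotProduct, SimpleGraph.adjMatrix_apply, ite_mul]

lemma mulVec_inl (v : V → ℝ) (j : Fin s) :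
    ((gJoin s m t 1).adjMatrix ℝ).mulVec v (inl j) = (∑ y : V, v y) - v (inl j) := by
  rw [mulVec_apply]
  have h : ∀ y : V, (if (gJoin s m t 1).Adj (inl j) y then v y else 0)
      = v y - (if inl j = y then v y else 0) := by
    intro y
    by_cases h : inl j = y <;> simp [adj_inl, h]
  simp only [h]
  rw [Finset.sum_sub_distrib, Finset.sum_ite_eq]
  simp

lemma mulVec_inr0 (v : V → ℝ) (q : Fin m) :
    ((gJoin s m t 1).adjMatrix ℝ).mulVec v (inr ⟨0, q⟩)
      = (∑ k : Fin s, v (inl k)) + (∑ r : Fin m, v (inr ⟨0, r⟩)) - v (inr ⟨0, q⟩) := by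
  rw [mulVec_apply, Fintype.sum_sum_type]
  have h1 : (∑ k : Fin s, if (gJoin s m t 1).Adj (inr ⟨0, q⟩) (inl k) then v (inl k) else 0)
      = ∑ k : Fin s, v (inl k) :=
    Finset.sum_congr rfl fun k _ => if_pos (adj_inr_inl _ _)
  rw [h1, sigma_sum (fun p => if (gJoin s m t 1).Adj (inr ⟨0, q⟩) (inr p) then v (inr p) else 0)]
  have h2 : ∀ r : Fin m, (if (gJoin s m t 1).Adj (inr ⟨0, q⟩) (inr ⟨0, r⟩)
        then v (inr ⟨0, r⟩) else 0)
      = v (inr ⟨0, r⟩) - (if q = r then v (inr ⟨0, r⟩) else 0) := by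
    intro r
    by_cases h : q = r <;> simp [adj_inr_inr, Sigma.mk.inj_iff, h, Ne, eq_comm]
    intro hh; exact absurd (eq_of_heq (Sigma.mk.inj_iff.mp hh).2) h
  have h3 : ∀ (i : Fin t) (q' : Fin 1),
      (if (gJoin s m t 1).Adj (inr ⟨0, q⟩) (inr ⟨i.succ, q'⟩) then v (inr ⟨i.succ, q'⟩) else 0)
        = 0 := by
    intro i q'
    rw [if_neg]
    simp [adj_inr_inr, (Fin.succ_ne_zero i).symm]
  simp only [h2, h3]
  rw [Finset.sum_sub_distrib, Finset.sum_ite_eq]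
  simp
  ring

lemma mulVec_inrsucc (v : V → ℝ) (i : Fin t) (q : Fin 1) :
    ((gJoin s m t 1).adjMatrix ℝ).mulVec v (inr ⟨i.succ, q⟩) = ∑ k : Fin s, v (inl k) := by
  rw [mulVec_apply, Fintype.sum_sum_type]
  have h1 : (∑ k : Fin s, if (gJoin s m t 1).Adj (inr ⟨i.succ, q⟩) (inl k) then v (inl k) else 0)
      = ∑ k : Fin s, v (inl k) :=
    Finset.sum_congr rfl fun k _ => if_pos (adj_inr_inl _ _)
  rw [h1,
    sigma_sum (fun p => if (gJoin s m t 1).Adj (inr ⟨i.succ, q⟩) (inr p) then v (inr p) else 0)]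
  have h2 : ∀ r : Fin m, (if (gJoin s m t 1).Adj (inr ⟨i.succ, q⟩) (inr ⟨0, r⟩)
      then v (inr ⟨0, r⟩) else 0) = 0 := by
    intro r
    rw [if_neg]
    simp [adj_inr_inr, Fin.succ_ne_zero i]
  have h3 : ∀ (j : Fin t) (q' : Fin 1),
      (if (gJoin s m t 1).Adj (inr ⟨i.succ, q⟩) (inr ⟨j.succ, q'⟩) then v (inr ⟨j.succ, q'⟩)
        else 0) = 0 := by
    intro j q'
    rw [if_neg]
    rw [adj_inr_inr]
    rintro ⟨hne, hfst⟩
    have hij : i = j := Fin.succ_injective _ hfst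
    subst hij
    exact hne (by rw [Subsingleton.elim q q'])
  simp only [h2, h3]
  simp

end DecAdj

def vfun (a b c : ℝ) : V → ℝ :=
  Sum.elim (fun _ => a) (fun p => if p.1 = 0 then b else c)

lemma vfun_inl (a b c : ℝ) (j : Fin s) : vfun a b c (inl j : V) = a := rfl

lemma vfun_b (a b c : ℝ) (q : Fin m) : vfun a b c (inr ⟨0, q⟩ : V) = b := by
  simp [vfun]

lemma vfun_c (a b c : ℝ) (i : Fin t) (q : Fin 1) :
    vfun a b c (inr ⟨i.succ, q⟩ : V) = c := by
  simp [vfun, Fin.succ_ne_zero]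

lemma sum_vfun_inl (a b c : ℝ) : ∑ k : Fin s, vfun a b c (inl k : V) = s * a := by
  simp [vfun]

lemma sum_vfun_b (a b c : ℝ) : ∑ r : Fin m, vfun a b c (inr ⟨0, r⟩ : V) = m * b := by
  simp [vfun]

lemma sum_vfun_total (a b c : ℝ) :
    ∑ y : V, vfun a b c y = s * a + m * b + t * c := by
  rw [Fintype.sum_sum_type, sigma_sum (fun p => vfun a b c (inr p))]
  simp only [sum_vfun_inl, sum_vfun_b, vfun_c]
  simp
  ring

section DecAdj2
variable [DecidableRel (gJoin s m t 1).Adj]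

lemma mulVec_vfun_inl (a b c : ℝ) (j : Fin s) :
    ((gJoin s m t 1).adjMatrix ℝ).mulVec (vfun a b c) (inl j)
      = ((s : ℝ) - 1) * a + m * b + t * c := by
  rw [mulVec_inl, sum_vfun_total, vfun_inl]
  ring

lemma mulVec_vfun_b (a b c : ℝ) (q : Fin m) :
    ((gJoin s m t 1).adjMatrix ℝ).mulVec (vfun a b c) (inr ⟨0, q⟩)
      = (s : ℝ) * a + ((m : ℝ) - 1) * b := by
  rw [mulVec_inr0, sum_vfun_inl, sum_vfun_b, vfun_b]
  ring

lemma mulVec_vfun_c (a b c : ℝ) (i : Fin t) (q : Fin 1) :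
    ((gJoin s m t 1).adjMatrix ℝ).mulVec (vfun a b c) (inr ⟨i.succ, q⟩)
      = (s : ℝ) * a := by
  rw [mulVec_inrsucc, sum_vfun_inl]

end DecAdj2

end Helpers

set_option maxHeartbeats 1000000 in
theorem stmt_7 (δ s n : ℕ) (hδ : 3 ≤ δ) (hs : 1 ≤ s) (hn : (δ - 1) * s + 2 ≤ n)
    (φ : ℝ → ℝ)
    (hφ : φ = fun x =>
      x ^ 3 + (-(n : ℝ) + ((δ : ℝ) - 2) * s + 3) * x ^ 2
        + (-(n : ℝ) - ((δ : ℝ) - 2) * s ^ 2 + ((δ : ℝ) - 3) * s + 2) * x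
        + ((δ : ℝ) - 2) * s ^ 2 * n + s * n - ((δ : ℝ) - 1) * ((δ : ℝ) - 2) * s ^ 3
        - (3 * (δ : ℝ) - 5) * s ^ 2 - 2 * s) :
    φ (specRad (gJoin s (n - (δ - 1) * s - 1) ((δ - 2) * s + 1) 1)) = 0 ∧
      ∀ x : ℝ, φ x = 0 → x ≤ specRad (gJoin s (n - (δ - 1) * s - 1) ((δ - 2) * s + 1) 1) := by
  obtain ⟨k, hk⟩ : ∃ k, δ = k + 3 := ⟨δ - 3, by omega⟩
  set m' := n - (δ - 1) * s - 1 with hm'def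
  set t' := (δ - 2) * s + 1 with ht'def
  clear_value m' t'
  have h1 : δ - 1 = k + 2 := by omega
  have h2 : δ - 2 = k + 1 := by omega
  have hm'eq : m' = n - (k * s + 2 * s) - 1 := by rw [hm'def, h1, add_mul]
  have ht'eq : t' = k * s + s + 1 := by rw [ht'def, h2, add_mul, one_mul]
  have hn' : k * s + 2 * s + 2 ≤ n := by rw [h1, add_mul] at hn; exact hn
  have hm0 : 0 < m' := by rw [hm'eq]; generalize k * s = K at hn' ⊢; omega
  have hsum : s + m' + t' = n := by
    rw [hm'eq, ht'eq]; generalize k * s = K at hn' ⊢; omega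
  have ht0' : 0 < t' := by rw [ht'def]; exact Nat.succ_pos _
  have hs0 : 0 < s := hs
  -- real casts
  have hδr : (δ : ℝ) = (k : ℝ) + 3 := by rw [hk]; push_cast; ring
  have htr : (t' : ℝ) = (k : ℝ) * s + s + 1 := by rw [ht'eq]; push_cast; ring
  have hnr : (n : ℝ) = (s : ℝ) + m' + t' := by rw [← hsum]; push_cast; ring
  have hsr1 : (1:ℝ) ≤ (s:ℝ) := by exact_mod_cast hs
  have hmr1 : (1:ℝ) ≤ (m':ℝ) := by exact_mod_cast hm0
  -- φ equals the determinant form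
  have hphi : ∀ x : ℝ, φ x
      = x * (x - s + 1) * (x - m' + 1) - (m' : ℝ) * s * x - (t' : ℝ) * s * (x - m' + 1) := by
    intro x
    simp only [hφ]
    rw [hδr, hnr, htr]
    ring
  -- largest root Λ
  obtain ⟨Λ, hΛge, hΛroot, hΛmax⟩ := largest_root
    (-(n : ℝ) + ((δ : ℝ) - 2) * s + 3)
    (-(n : ℝ) - ((δ : ℝ) - 2) * s ^ 2 + ((δ : ℝ) - 3) * s + 2)
    (((δ : ℝ) - 2) * s ^ 2 * n + s * n - ((δ : ℝ) - 1) * ((δ : ℝ) - 2) * s ^ 3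
      - (3 * (δ : ℝ) - 5) * s ^ 2 - 2 * s)
    ((m' : ℝ) - 1)
    (by
      have heq : ((m' : ℝ) - 1) ^ 3 + (-(n : ℝ) + ((δ : ℝ) - 2) * s + 3) * ((m' : ℝ) - 1) ^ 2
          + (-(n : ℝ) - ((δ : ℝ) - 2) * s ^ 2 + ((δ : ℝ) - 3) * s + 2) * ((m' : ℝ) - 1)
          + (((δ : ℝ) - 2) * s ^ 2 * n + s * n - ((δ : ℝ) - 1) * ((δ : ℝ) - 2) * s ^ 3
            - (3 * (δ : ℝ) - 5) * s ^ 2 - 2 * s) = φ ((m' : ℝ) - 1) := by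
        simp only [hφ]; ring
      rw [heq, hphi]
      have h3 : ((m':ℝ) - 1) * (((m':ℝ) - 1) - s + 1) * (((m':ℝ) - 1) - m' + 1)
          - (m' : ℝ) * s * ((m':ℝ) - 1) - (t' : ℝ) * s * (((m':ℝ) - 1) - m' + 1)
          = -((m':ℝ) * s * ((m':ℝ) - 1)) := by ring
      rw [h3]
      have h4 : (0:ℝ) ≤ (m':ℝ) * s * ((m':ℝ) - 1) :=
        mul_nonneg (mul_nonneg (by linarith) (by linarith)) (by linarith)
      linarith)
  have hφ' : ∀ x : ℝ, φ x = x ^ 3 + (-(n : ℝ) + ((δ : ℝ) - 2) * s + 3) * x ^ 2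
      + (-(n : ℝ) - ((δ : ℝ) - 2) * s ^ 2 + ((δ : ℝ) - 3) * s + 2) * x
      + (((δ : ℝ) - 2) * s ^ 2 * n + s * n - ((δ : ℝ) - 1) * ((δ : ℝ) - 2) * s ^ 3
        - (3 * (δ : ℝ) - 5) * s ^ 2 - 2 * s) := by
    intro x; simp only [hφ]; ring
  have hΛroot' : φ Λ = 0 := by rw [hφ']; exact hΛroot
  have hΛmax' : ∀ x : ℝ, φ x = 0 → x ≤ Λ := fun x hx => hΛmax x (by rw [← hφ']; exact hx)
  have hΛ0 : (0:ℝ) ≤ Λ := le_trans (by linarith) hΛge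
  -- graph part
  letI instE : DecidableEq (Fin s ⊕
      (Σ i : Fin (t'+1), Fin ((Fin.cons m' fun _ => 1 : Fin (t'+1) → ℕ) i))) :=
    Classical.decEq _
  letI instR : DecidableRel (gJoin s m' t' 1).Adj := Classical.decRel _
  have hspec : specRad (gJoin s m' t' 1)
      = sSup (spectrum ℝ ((gJoin s m' t' 1).adjMatrix ℝ)) := rfl
  have hgreat : IsGreatest (spectrum ℝ ((gJoin s m' t' 1).adjMatrix ℝ)) Λ := by
    constructor
    · rw [spec_iff]
      have hdetΛ : Λ * (Λ - s + 1) * (Λ - m' + 1) - (m':ℝ) * s * Λ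
          - (t':ℝ) * s * (Λ - m' + 1) = 0 := by
        rw [← hphi]; exact hΛroot'
      obtain ⟨a, b, c, h0, e1, e2, e3⟩ := (cubic_iff (s:ℝ) (m':ℝ) (t':ℝ) Λ).mpr hdetΛ
      refine ⟨vfun a b c, ?_, ?_⟩
      · intro hzero
        apply h0
        refine ⟨?_, ?_, ?_⟩
        · have := congrFun hzero (Sum.inl ⟨0, hs0⟩)
          simpa [vfun] using this
        · have := congrFun hzero (Sum.inr ⟨0, (⟨0, hm0⟩ : Fin m')⟩)
          simpa [vfun] using this
        · have := congrFun hzero (Sum.inr ⟨(⟨0, ht0'⟩ : Fin t').succ, (0 : Fin 1)⟩)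
          simpa [vfun, Fin.succ_ne_zero] using this
      · funext x
        rcases x with j | ⟨i, q⟩
        · rw [mulVec_vfun_inl]
          simp only [Pi.smul_apply, smul_eq_mul, vfun_inl]
          linarith [e1]
        · rcases Fin.eq_zero_or_eq_succ i with rfl | ⟨i', rfl⟩
          · rw [mulVec_vfun_b (s := s) (m := m') (t := t') a b c q]
            simp only [Pi.smul_apply, smul_eq_mul]
            rw [vfun_b (s := s) (m := m') (t := t') a b c q]
            linarith [e2]
          · rw [mulVec_vfun_c (s := s) (m := m') (t := t') a b c i' q]
            simp only [Pi.smul_apply, smul_eq_mul]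
            rw [vfun_c (s := s) (m := m') (t := t') a b c i' q]
            linarith [e3]
    · intro μ hμ
      rw [spec_iff] at hμ
      obtain ⟨v, hv, he⟩ := hμ
      by_cases hμ1 : μ = -1
      · linarith
      by_cases hμ0 : μ = 0
      · linarith
      have hμ1' : μ + 1 ≠ 0 := fun h => hμ1 (by linarith)
      have hA : ∀ j : Fin s, (μ + 1) * v (Sum.inl j) = ∑ y, v y := by
        intro j
        have h1 := congrFun he (Sum.inl j)
        rw [mulVec_inl] at h1
        simp only [Pi.smul_apply, smul_eq_mul] at h1
        linarith
      have hB : ∀ q : Fin m', (μ + 1) * v (Sum.inr ⟨0, q⟩)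
          = (∑ kk : Fin s, v (Sum.inl kk)) + ∑ r : Fin m', v (Sum.inr ⟨0, r⟩) := by
        intro q
        have h1 := congrFun he (Sum.inr ⟨(0 : Fin (t'+1)), q⟩)
        rw [mulVec_inr0] at h1
        simp only [Pi.smul_apply, smul_eq_mul] at h1
        linarith
      have hC : ∀ (i : Fin t') (q : Fin 1), μ * v (Sum.inr ⟨i.succ, q⟩)
          = ∑ kk : Fin s, v (Sum.inl kk) := by
        intro i q
        have h1 := congrFun he (Sum.inr ⟨i.succ, q⟩)
        rw [mulVec_inrsucc] at h1
        simp only [Pi.smul_apply, smul_eq_mul] at h1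
        linarith
      have hveq : v = vfun (v (Sum.inl ⟨0, hs0⟩)) (v (Sum.inr ⟨0, (⟨0, hm0⟩ : Fin m')⟩))
          (v (Sum.inr ⟨(⟨0, ht0'⟩ : Fin t').succ, (0 : Fin 1)⟩)) := by
        funext x
        rcases x with j | ⟨i, q⟩
        · rw [vfun_inl]
          exact mul_left_cancel₀ hμ1' ((hA j).trans (hA ⟨0, hs0⟩).symm)
        · rcases Fin.eq_zero_or_eq_succ i with rfl | ⟨i', rfl⟩
          · refine Eq.trans ?_ (vfun_b (s := s) (m := m') (t := t') _ _ _ q).symm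
            exact mul_left_cancel₀ hμ1' ((hB q).trans (hB ⟨0, hm0⟩).symm)
          · refine Eq.trans ?_ (vfun_c (s := s) (m := m') (t := t') _ _ _ i' q).symm
            exact mul_left_cancel₀ hμ0 ((hC i' q).trans (hC ⟨0, ht0'⟩ (0 : Fin 1)).symm)
      set a := v (Sum.inl ⟨0, hs0⟩) with ha
      set b := v (Sum.inr ⟨0, (⟨0, hm0⟩ : Fin m')⟩) with hb
      set c := v (Sum.inr ⟨(⟨0, ht0'⟩ : Fin t').succ, (0 : Fin 1)⟩) with hc
      rw [hveq] at he
      have e1 : μ * a = ((s:ℝ) - 1) * a + m' * b + t' * c := by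
        have h1 := congrFun he (Sum.inl ⟨0, hs0⟩)
        rw [mulVec_vfun_inl] at h1
        simp only [Pi.smul_apply, smul_eq_mul, vfun_inl] at h1
        linarith
      have e2 : μ * b = (s:ℝ) * a + ((m':ℝ) - 1) * b := by
        have h1 := congrFun he (Sum.inr ⟨0, (⟨0, hm0⟩ : Fin m')⟩)
        rw [mulVec_vfun_b] at h1
        simp only [Pi.smul_apply, smul_eq_mul] at h1
        rw [vfun_b] at h1
        linarith
      have e3 : μ * c = (s:ℝ) * a := by
        have h1 := congrFun he (Sum.inr ⟨(⟨0, ht0'⟩ : Fin t').succ, (0 : Fin 1)⟩)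
        rw [mulVec_vfun_c] at h1
        simp only [Pi.smul_apply, smul_eq_mul] at h1
        rw [vfun_c] at h1
        linarith
      have h0 : ¬(a = 0 ∧ b = 0 ∧ c = 0) := by
        rintro ⟨ha0, hb0, hc0⟩
        apply hv
        rw [hveq, ha0, hb0, hc0]
        funext x
        rcases x with j | ⟨i, q⟩ <;> simp [vfun]
      have hdet := (cubic_iff (s:ℝ) (m':ℝ) (t':ℝ) μ).mp ⟨a, b, c, h0, e1, e2, e3⟩
      exact hΛmax' μ (by rw [hphi]; exact hdet)
  rw [hspec, hgreat.csSup_eq]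
  exact ⟨hΛroot', hΛmax'⟩
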